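/- For j ≥ 6 let ρ_j be the unique real solution in (0,1) of σ_j(z) = 1, where σ_j(z) = σ(z) - z^j/(1-z^j) and σ(z) = ∑_{ℓ≥1} (-1)^{ℓ-1} z^ℓ/(1-z^ℓ), and let ρ be the unique real solution of σ(z) = 1 in (0,1). Then, as j → ∞, ρ_j = ρ + ρ^j/σ'(ρ) + o(ρ^j); that is, (ρ_j - ρ - ρ^j/σ'(ρ))/ρ^j → 0 as j → ∞, where σ'(ρ) denotes the derivative of σ at ρ. -/

import Mathlib

open Filter

/-- `σ(z) = ∑_{ℓ≥1} (-1)^{ℓ-1} z^ℓ/(1-z^ℓ)` for real `z`. -/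
noncomputable def sigmaFn (z : ℝ) : ℝ :=
  ∑' ℓ : ℕ, (-1 : ℝ) ^ ℓ * z ^ (ℓ + 1) / (1 - z ^ (ℓ + 1))

/-- `σ_j(z) = σ(z) - z^j/(1-z^j)`. -/
noncomputable def sigmaJFn (j : ℕ) (z : ℝ) : ℝ :=
  sigmaFn z - z ^ j / (1 - z ^ j)

open Set


lemma alt_bounds (a : ℕ → ℝ) (hs : Summable a) (h0 : ∀ n, 0 ≤ a n)
    (hm : ∀ n, a (n + 1) ≤ a n) :
    a 0 - a 1 ≤ ∑' n, (-1 : ℝ) ^ n * a n ∧ (∑' n, (-1 : ℝ) ^ n * a n) ≤ a 0 := by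
  set f : ℕ → ℝ := fun n => (-1 : ℝ) ^ n * a n with hf
  have hsf : Summable f := by
    apply Summable.of_norm
    have : (fun n => ‖f n‖) = a := by
      funext n
      simp [hf, Real.norm_eq_abs, abs_mul, abs_of_nonneg (h0 n)]
    rw [this]; exact hs
  have h2k : ∀ k : ℕ, f (2 * k) = a (2 * k) := by
    intro k; simp [hf, pow_mul]
  have h2k1 : ∀ k : ℕ, f (2 * k + 1) = -a (2 * k + 1) := by
    intro k; simp [hf, pow_succ, pow_mul]
  have hinj2 : Function.Injective (fun k : ℕ => 2 * k) := fun x y h => by simp only [] at h; omega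
  have hinj21 : Function.Injective (fun k : ℕ => 2 * k + 1) := fun x y h => by simp only [] at h; omega
  have hse : Summable fun k => a (2 * k) := hs.comp_injective hinj2
  have hso : Summable fun k => a (2 * k + 1) := hs.comp_injective hinj21
  constructor
  · have := tsum_even_add_odd (f := f) (by simpa [h2k] using hse)
      (by
        have : Summable fun k => -a (2 * k + 1) := hso.neg
        simpa [h2k1] using this)
    rw [← this]
    have he : (∑' k, f (2 * k)) = ∑' k, a (2 * k) := by simp [h2k]
    have ho : (∑' k, f (2 * k + 1)) = -∑' k, a (2 * k + 1) := by
      simp only [h2k1]; exact tsum_neg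
    rw [he, ho, ← sub_eq_add_neg, ← Summable.tsum_sub hse hso]
    have key : a (2 * 0) - a (2 * 0 + 1) ≤ ∑' k, (a (2 * k) - a (2 * k + 1)) := by
      apply Summable.le_tsum (hse.sub hso) 0
      intro j _
      have := hm (2 * j)
      linarith [this]
    simpa using key
  · have hshift : Summable fun n => f (n + 1) := by
      have := (summable_nat_add_iff (f := f) 1).2 hsf
      simpa using this
    rw [Summable.tsum_eq_zero_add hsf]
    have h0' : f 0 = a 0 := by simp [hf]
    have htail : (∑' n, f (n + 1)) ≤ 0 := by
      have he : Summable fun k => f (2 * k + 1) := by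
        have : Summable fun k => -a (2 * k + 1) := hso.neg
        simpa [h2k1] using this
      have ho : Summable fun k => f (2 * k + 2) := by
        have : Summable fun k => a (2 * k + 2) :=
          hs.comp_injective (fun x y h => by simp only [] at h; omega : Function.Injective fun k : ℕ => 2 * k + 2)
        simpa [h2k, show ∀ k:ℕ, 2*k+2 = 2*(k+1) by omega, hf, pow_mul] using this
      have hsplit := tsum_even_add_odd (f := fun n => f (n + 1)) (by simpa using he)
        (by simpa [show ∀ k:ℕ, 2*k+1+1 = 2*k+2 by omega] using ho)
      rw [← hsplit]
      have t1 : (∑' k, f (2 * k + 1)) = -∑' k, a (2 * k + 1) := by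
        simp only [h2k1]; exact tsum_neg
      have t2 : (∑' k, f (2 * k + 1 + 1)) = ∑' k, a (2 * k + 2) := by
        congr 1; funext k
        have : 2 * k + 1 + 1 = 2 * (k + 1) := by omega
        rw [this, h2k]
      rw [t1, t2]
      have hso2 : Summable fun k => a (2 * k + 2) :=
        hs.comp_injective (fun x y h => by simp only [] at h; omega : Function.Injective fun k : ℕ => 2 * k + 2)
      have : (∑' k, a (2 * k + 2)) ≤ ∑' k, a (2 * k + 1) := by
        apply Summable.tsum_le_tsum _ hso2 hso
        intro k; exact hm (2 * k + 1)
      linarith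
    linarith [htail, h0'.symm.le]

lemma pow_succ_le_self' {z : ℝ} (hz : z ∈ Ioo (0:ℝ) 1) (n : ℕ) : z ^ (n + 1) ≤ z := by
  calc z ^ (n + 1) ≤ z ^ 1 := pow_le_pow_of_le_one hz.1.le hz.2.le (by omega)
  _ = z := pow_one z

lemma den_pos {z : ℝ} (hz : z ∈ Ioo (0:ℝ) 1) (n : ℕ) : 0 < 1 - z ^ (n + 1) := by
  have := pow_succ_le_self' hz n
  linarith [hz.2]

lemma summable_a {z : ℝ} (hz : z ∈ Ioo (0:ℝ) 1) :
    Summable (fun n : ℕ => z ^ (n + 1) / (1 - z ^ (n + 1))) := by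
  have hg : Summable (fun n : ℕ => (z * (1 - z)⁻¹) * z ^ n) :=
    (summable_geometric_of_lt_one hz.1.le hz.2).mul_left _
  apply Summable.of_nonneg_of_le _ _ hg
  · intro n
    exact div_nonneg (pow_nonneg hz.1.le _) (den_pos hz n).le
  · intro n
    have h1 : (0:ℝ) < 1 - z := by linarith [hz.2]
    have h2 := den_pos hz n
    have h3 : 1 - z ≤ 1 - z ^ (n + 1) := by
      have := pow_succ_le_self' hz n; linarith
    calc z ^ (n + 1) / (1 - z ^ (n + 1)) ≤ z ^ (n + 1) / (1 - z) :=
          div_le_div_of_nonneg_left (pow_nonneg hz.1.le _) h1 h3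
    _ = z * (1 - z)⁻¹ * z ^ n := by ring

lemma a_antitone {z : ℝ} (hz : z ∈ Ioo (0:ℝ) 1) (n : ℕ) :
    z ^ (n + 1 + 1) / (1 - z ^ (n + 1 + 1)) ≤ z ^ (n + 1) / (1 - z ^ (n + 1)) := by
  have h1 := den_pos hz n
  have h2 := den_pos hz (n + 1)
  have hnum : z ^ (n + 1 + 1) ≤ z ^ (n + 1) :=
    pow_le_pow_of_le_one hz.1.le hz.2.le (by omega)
  have hden : 1 - z ^ (n + 1) ≤ 1 - z ^ (n + 1 + 1) := by linarith
  exact div_le_div₀ (pow_nonneg hz.1.le _) hnum h1 hden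

lemma sigmaFn_eq {z : ℝ} :
    sigmaFn z = ∑' n : ℕ, (-1:ℝ) ^ n * (z ^ (n + 1) / (1 - z ^ (n + 1))) := by
  unfold sigmaFn
  congr 1; funext n; rw [mul_div_assoc]

lemma sigma_bounds {z : ℝ} (hz : z ∈ Ioo (0:ℝ) 1) :
    z / (1 - z ^ 2) ≤ sigmaFn z ∧ sigmaFn z ≤ z / (1 - z) := by
  have h := alt_bounds (fun n => z ^ (n + 1) / (1 - z ^ (n + 1))) (summable_a hz)
    (fun n => div_nonneg (pow_nonneg hz.1.le _) (den_pos hz n).le) (a_antitone hz)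
  rw [sigmaFn_eq]
  have h1 : (0:ℝ) < 1 - z := by linarith [hz.2]
  have h2 : (0:ℝ) < 1 - z ^ 2 := den_pos hz 1
  have e1 : z ^ (0 + 1) / (1 - z ^ (0 + 1)) - z ^ (0 + 1 + 1) / (1 - z ^ (0 + 1 + 1))
      = z / (1 - z ^ 2) := by
    norm_num
    rw [div_sub_div _ _ (by linarith : (1:ℝ) - z ≠ 0) (by linarith : (1:ℝ) - z ^ 2 ≠ 0)]
    rw [div_eq_div_iff (by nlinarith) h2.ne']
    ring
  constructor
  · calc z / (1 - z^2) = _ := e1.symm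
    _ ≤ _ := h.1
  · calc (∑' n : ℕ, (-1:ℝ) ^ n * (z ^ (n + 1) / (1 - z ^ (n + 1)))) ≤ _ := h.2
    _ = z ^ (0+1) / (1 - z ^ (0+1)) := rfl
    _ = z / (1 - z) := by norm_num

lemma rho_loc {ρ : ℝ} (hρ : ρ ∈ Ioo (0:ℝ) 1) (h1 : sigmaFn ρ = 1) :
    1/2 ≤ ρ ∧ ρ < 2/3 := by
  obtain ⟨hlb, hub⟩ := sigma_bounds hρ
  rw [h1] at hlb hub
  have hz1 : (0:ℝ) < 1 - ρ := by linarith [hρ.2]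
  have hz2 : (0:ℝ) < 1 - ρ ^ 2 := den_pos hρ 1
  constructor
  · rw [le_div_iff₀ hz1] at hub; linarith
  · rw [div_le_one hz2] at hlb
    nlinarith
lemma tj_le_t6 {e : ℝ} (he : e ∈ Ioo (0:ℝ) 1) {j : ℕ} (hj : 6 ≤ j) :
    e ^ j / (1 - e ^ j) ≤ e ^ 6 / (1 - e ^ 6) := by
  obtain ⟨m, rfl⟩ : ∃ m, j = m + 1 := ⟨j - 1, by omega⟩
  have h1 := den_pos he m
  have h2 := den_pos he 5
  have hnum : e ^ (m + 1) ≤ e ^ 6 := pow_le_pow_of_le_one he.1.le he.2.le (by omega)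
  have hden : 1 - e ^ 6 ≤ 1 - e ^ (m + 1) := by linarith
  calc e ^ (m+1) / (1 - e ^ (m+1)) ≤ e ^ 6 / (1 - e ^ 6) :=
    div_le_div₀ (pow_nonneg he.1.le _) hnum (by norm_num at h2 ⊢; exact h2) hden

lemma e_pow_pos {e : ℝ} (he : e ∈ Ioo (0:ℝ) 1) {j : ℕ} (hj : 6 ≤ j) :
    0 < e ^ j / (1 - e ^ j) := by
  obtain ⟨m, rfl⟩ : ∃ m, j = m + 1 := ⟨j - 1, by omega⟩
  exact div_pos (pow_pos he.1 _) (den_pos he m)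

lemma e_loc {e : ℝ} (he : e ∈ Ioo (0:ℝ) 1) {j : ℕ} (hj : 6 ≤ j)
    (h1 : sigmaJFn j e = 1) : 1/2 ≤ e ∧ e < 2/3 := by
  have hq : 0 < e ^ j / (1 - e ^ j) := e_pow_pos he hj
  have hσ : sigmaFn e = 1 + e ^ j / (1 - e ^ j) := by
    unfold sigmaJFn at h1; linarith
  obtain ⟨hlb, hub⟩ := sigma_bounds he
  have hz1 : (0:ℝ) < 1 - e := by linarith [he.2]
  constructor
  · have : (1:ℝ) ≤ e / (1 - e) := by
      calc (1:ℝ) ≤ sigmaFn e := by rw [hσ]; linarith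
      _ ≤ e / (1 - e) := hub
    rw [le_div_iff₀ hz1] at this; linarith
  · by_contra hcon
    push_neg at hcon
    have he23 : (2:ℝ)/3 ≤ e := hcon
    have h2 : (0:ℝ) < 1 - e ^ 2 := den_pos he 1
    have h6 : (0:ℝ) < 1 - e ^ 6 := den_pos he 5
    -- 1 = sigmaFn e - q ≥ e/(1-e²) - e⁶/(1-e⁶) > 1
    have hge : e / (1 - e ^ 2) - e ^ 6 / (1 - e ^ 6) ≤ 1 := by
      have ht := tj_le_t6 he hj
      have : e / (1 - e ^ 2) ≤ sigmaFn e := hlb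
      rw [hσ] at this
      linarith
    have hkey : 1 < e / (1 - e ^ 2) - e ^ 6 / (1 - e ^ 6) := by
      rw [div_sub_div _ _ h2.ne' h6.ne', lt_div_iff₀ (by positivity)]
      have hsum : (0:ℝ) < e^2 + e^3 + e^4 + e^5 + e^6 - 1 := by
        have p2 : (2/3:ℝ)^2 ≤ e^2 := pow_le_pow_left₀ (by norm_num) he23 2
        have p3 : (2/3:ℝ)^3 ≤ e^3 := pow_le_pow_left₀ (by norm_num) he23 3
        have p4 : (2/3:ℝ)^4 ≤ e^4 := pow_le_pow_left₀ (by norm_num) he23 4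
        have p5 : (2/3:ℝ)^5 ≤ e^5 := pow_le_pow_left₀ (by norm_num) he23 5
        have p6 : (2/3:ℝ)^6 ≤ e^6 := pow_le_pow_left₀ (by norm_num) he23 6
        nlinarith
      nlinarith [mul_pos hz1 hsum]
    linarith

noncomputable def gFn (z : ℝ) : ℝ :=
  ∑' n : ℕ, (-1:ℝ) ^ n * (((n:ℝ) + 1) * z ^ n / (1 - z ^ (n + 1)) ^ 2)

/-- the open interval used for differentiation -/
def tSet : Set ℝ := Ioo (7/20 : ℝ) (3/4)

lemma tSet_sub : tSet ⊆ Ioo (0:ℝ) 1 := fun x hx => ⟨by linarith [hx.1], by linarith [hx.2]⟩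

lemma uBound_summable : Summable (fun n : ℕ => 16 * (((n:ℝ) + 1) * (3/4) ^ n)) := by
  have h1 : Summable (fun n : ℕ => ((n:ℝ)) ^ 1 * (3/4) ^ n) :=
    summable_pow_mul_geometric_of_norm_lt_one 1 (by rw [Real.norm_eq_abs]; rw [abs_of_nonneg]; norm_num; norm_num)
  have h2 : Summable (fun n : ℕ => ((3:ℝ)/4) ^ n) :=
    summable_geometric_of_lt_one (by norm_num) (by norm_num)
  have := (h1.add h2).mul_left (16:ℝ)
  apply this.congr
  intro n; ring

lemma term_hasDerivAt {y : ℝ} (hy : y ∈ tSet) (n : ℕ) :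
    HasDerivAt (fun z : ℝ => (-1:ℝ) ^ n * z ^ (n + 1) / (1 - z ^ (n + 1)))
      ((-1:ℝ) ^ n * (((n:ℝ) + 1) * y ^ n / (1 - y ^ (n + 1)) ^ 2)) y := by
  have hy01 : y ∈ Ioo (0:ℝ) 1 := tSet_sub hy
  have hden := den_pos hy01 n
  have hnum : HasDerivAt (fun z : ℝ => (-1:ℝ) ^ n * z ^ (n + 1))
      ((-1:ℝ) ^ n * (((n:ℝ) + 1) * y ^ n)) y := by
    have := (hasDerivAt_pow (n + 1) y).const_mul ((-1:ℝ) ^ n)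
    refine this.congr_deriv ?_
    push_cast
    ring_nf
  have hd : HasDerivAt (fun z : ℝ => 1 - z ^ (n + 1)) (-(((n:ℝ) + 1) * y ^ n)) y := by
    have := (hasDerivAt_pow (n + 1) y).const_sub 1
    refine this.congr_deriv ?_
    push_cast
    ring_nf
  have := hnum.div hd hden.ne'
  refine this.congr_deriv ?_
  field_simp
  ring

lemma term_deriv_bound {y : ℝ} (hy : y ∈ tSet) (n : ℕ) :
    ‖(-1:ℝ) ^ n * (((n:ℝ) + 1) * y ^ n / (1 - y ^ (n + 1)) ^ 2)‖
      ≤ 16 * (((n:ℝ) + 1) * (3/4) ^ n) := by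
  have hy01 : y ∈ Ioo (0:ℝ) 1 := tSet_sub hy
  have h0 : (0:ℝ) < y := hy01.1
  have h34 : y ≤ 3/4 := hy.2.le
  have hpow : y ^ (n + 1) ≤ (3/4) ^ (n + 1) := pow_le_pow_left₀ h0.le h34 _
  have h34p : ((3:ℝ)/4) ^ (n + 1) ≤ 3/4 := by
    calc ((3:ℝ)/4) ^ (n + 1) ≤ (3/4) ^ 1 := by
          apply pow_le_pow_of_le_one (by norm_num) (by norm_num) (by omega)
    _ = 3/4 := pow_one _
  have hden : (1:ℝ)/4 ≤ 1 - y ^ (n + 1) := by linarith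
  have hden2 : (1:ℝ)/16 ≤ (1 - y ^ (n + 1)) ^ 2 := by nlinarith [den_pos hy01 n]
  rw [Real.norm_eq_abs, abs_mul, abs_pow, abs_neg, abs_one, one_pow, one_mul]
  rw [abs_of_nonneg (by
    exact div_nonneg (by positivity) (sq_nonneg _))]
  have hyn : y ^ n ≤ (3/4) ^ n := pow_le_pow_left₀ h0.le h34 n
  calc ((n:ℝ) + 1) * y ^ n / (1 - y ^ (n + 1)) ^ 2
      ≤ ((n:ℝ) + 1) * (3/4) ^ n / (1/16) := by
        apply div_le_div₀ (by positivity) _ (by norm_num) hden2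
        have : (0:ℝ) ≤ (n:ℝ) + 1 := by positivity
        nlinarith
  _ = 16 * (((n:ℝ) + 1) * (3/4) ^ n) := by ring

lemma sigma_hasDerivAt {y : ℝ} (hy : y ∈ tSet) : HasDerivAt sigmaFn (gFn y) y := by
  have h12 : (1/2 : ℝ) ∈ tSet := by constructor <;> norm_num
  have := hasDerivAt_tsum_of_isPreconnected uBound_summable isOpen_Ioo
    (isPreconnected_Ioo)
    (fun n z hz => term_hasDerivAt hz n)
    (fun n z hz => term_deriv_bound hz n)
    h12
    (by
      have hs := summable_a (tSet_sub h12)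
      apply Summable.of_norm
      apply hs.congr
      intro n
      rw [Real.norm_eq_abs, mul_div_assoc, abs_mul, abs_pow, abs_neg, abs_one, one_pow, one_mul]
      rw [abs_of_nonneg (div_nonneg (pow_nonneg (by norm_num) _) (den_pos (tSet_sub h12) n).le)])
    hy
  unfold sigmaFn gFn
  exact this

lemma gFn_continuousOn : ContinuousOn gFn tSet := by
  have hunif := tendstoUniformlyOn_tsum uBound_summable
    (fun n x hx => term_deriv_bound hx n) (s := tSet)
  apply hunif.continuousOn
  refine Filter.Eventually.frequently ?_
  filter_upwards with s
  apply continuousOn_finset_sum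
  intro n _
  apply ContinuousOn.mul continuousOn_const
  apply ContinuousOn.div
  · exact (continuous_const.mul (continuous_pow n)).continuousOn
  · exact ((continuous_const.sub (continuous_pow (n+1))).pow 2).continuousOn
  · intro x hx
    exact pow_ne_zero _ (den_pos (tSet_sub hx) n).ne'

lemma Icc_sub_tSet : Icc (1/2:ℝ) (2/3) ⊆ tSet :=
  fun x hx => ⟨by linarith [hx.1], by linarith [hx.2]⟩

lemma gFn_ge_one {z : ℝ} (hz : z ∈ Icc (1/2:ℝ) (2/3)) : 1 ≤ gFn z := by
  have hz01 : z ∈ Ioo (0:ℝ) 1 := tSet_sub (Icc_sub_tSet hz)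
  set b : ℕ → ℝ := fun n => ((n:ℝ) + 1) * z ^ n / (1 - z ^ (n + 1)) ^ 2 with hb
  have hbnn : ∀ n, 0 ≤ b n := fun n =>
    div_nonneg (mul_nonneg (by positivity) (pow_nonneg hz01.1.le _)) (sq_nonneg _)
  have hsb : Summable b := by
    apply Summable.of_nonneg_of_le hbnn _ uBound_summable
    intro n
    have := term_deriv_bound (Icc_sub_tSet hz) n
    rw [Real.norm_eq_abs, abs_mul, abs_pow, abs_neg, abs_one, one_pow, one_mul,
      abs_of_nonneg (hbnn n)] at this
    exact this
  have hmono : ∀ n, b (n + 1) ≤ b n := by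
    intro n
    have hd1 := den_pos hz01 n
    have hd2 := den_pos hz01 (n + 1)
    have hpden : (1 - z ^ (n + 1)) ^ 2 ≤ (1 - z ^ (n + 1 + 1)) ^ 2 := by
      have h1 : z ^ (n + 1 + 1) ≤ z ^ (n + 1) :=
        pow_le_pow_of_le_one hz01.1.le hz01.2.le (by omega)
      nlinarith
    match n with
    | 0 =>
      simp only [hb]
      rw [div_le_div_iff₀ (by positivity) (by positivity)]
      have h1 : (0:ℝ) < 1 - z := by norm_num at hd1 ⊢; linarith
      norm_num
      nlinarith [sq_nonneg (1 - z), sq_nonneg z, hz01.1]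
    | Nat.succ m =>
      simp only [Nat.succ_eq_add_one]
      apply div_le_div₀ (mul_nonneg (by positivity) (pow_nonneg hz01.1.le _)) _
        (by positivity) hpden
      have hz23 : z ≤ 2/3 := hz.2
      have hpow : (0:ℝ) ≤ z ^ (m + 1) := pow_nonneg hz01.1.le _
      push_cast
      rw [pow_succ z (m + 1)]
      have key : ((m:ℝ) + 1 + 1 + 1) * z ≤ (m:ℝ) + 1 + 1 := by
        nlinarith [(Nat.cast_nonneg m : (0:ℝ) ≤ (m:ℝ)), hz01.1.le]
      nlinarith [mul_le_mul_of_nonneg_right key hpow]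
  have halt := alt_bounds b hsb hbnn hmono
  have hg : gFn z = ∑' n, (-1:ℝ) ^ n * b n := rfl
  rw [hg]
  refine le_trans ?_ halt.1
  have hb0 : b 0 = 1 / (1 - z) ^ 2 := by simp [hb]
  have hb1 : b 1 = 2 * z / (1 - z ^ 2) ^ 2 := by norm_num [hb]
  rw [hb0, hb1]
  have h1 : (0:ℝ) < 1 - z := by linarith [hz01.2]
  have h2 : (0:ℝ) < 1 - z ^ 2 := den_pos hz01 1
  rw [div_sub_div _ _ (by positivity) (by positivity), le_div_iff₀ (by positivity)]
  nlinarith [sq_nonneg (1 - z ^ 2), sq_nonneg z, sq_nonneg (z*(1-z)), sq_nonneg (1-z)]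

lemma sigma_contOn : ContinuousOn sigmaFn (Icc (1/2:ℝ) (2/3)) := fun x hx =>
  (sigma_hasDerivAt (Icc_sub_tSet hx)).continuousAt.continuousWithinAt

lemma mvt_step {ρ e : ℝ} (hρ : ρ ∈ Icc (1/2:ℝ) (2/3)) (he : e ∈ Icc (1/2:ℝ) (2/3))
    (hne : e ≠ ρ) :
    ∃ c ∈ Icc (1/2:ℝ) (2/3), |c - ρ| ≤ |e - ρ| ∧
      gFn c * (e - ρ) = sigmaFn e - sigmaFn ρ := by
  rcases lt_or_gt_of_ne hne with h | h
  · -- e < ρ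
    obtain ⟨c, hc, hceq⟩ := exists_hasDerivAt_eq_slope sigmaFn gFn h
      (sigma_contOn.mono (Icc_subset_Icc he.1 hρ.2))
      (fun x hx => sigma_hasDerivAt (Icc_sub_tSet ⟨le_trans he.1 hx.1.le, le_trans hx.2.le hρ.2⟩))
    refine ⟨c, ⟨le_trans he.1 hc.1.le, le_trans hc.2.le hρ.2⟩, ?_, ?_⟩
    · rw [abs_sub_comm e ρ, abs_of_pos (by linarith : (0:ℝ) < ρ - e),
        abs_of_nonpos (by linarith [hc.2] : c - ρ ≤ 0)]
      linarith [hc.1]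
    · rw [hceq, div_mul_eq_mul_div, div_eq_iff (by linarith : ρ - e ≠ 0)]
      ring
  · -- ρ < e
    obtain ⟨c, hc, hceq⟩ := exists_hasDerivAt_eq_slope sigmaFn gFn h
      (sigma_contOn.mono (Icc_subset_Icc hρ.1 he.2))
      (fun x hx => sigma_hasDerivAt (Icc_sub_tSet ⟨le_trans hρ.1 hx.1.le, le_trans hx.2.le he.2⟩))
    refine ⟨c, ⟨le_trans hρ.1 hc.1.le, le_trans hc.2.le he.2⟩, ?_, ?_⟩
    · rw [abs_of_pos (by linarith : (0:ℝ) < e - ρ),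
        abs_of_nonneg (by linarith [hc.1] : (0:ℝ) ≤ c - ρ)]
      linarith [hc.2]
    · rw [hceq, div_mul_eq_mul_div, div_eq_iff (by linarith : e - ρ ≠ 0)]
      try ring

lemma abs_log_le {x : ℝ} (hx : 3/4 ≤ x) : |Real.log x| ≤ (4/3) * |x - 1| := by
  have hx0 : (0:ℝ) < x := by linarith
  rcases le_or_gt 1 x with h | h
  · rw [abs_of_nonneg (Real.log_nonneg h), abs_of_nonneg (by linarith)]
    have := Real.log_le_sub_one_of_pos hx0
    linarith
  · rw [abs_of_nonpos (Real.log_nonpos hx0.le h.le), abs_of_neg (by linarith)]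
    have hinv : Real.log x⁻¹ ≤ x⁻¹ - 1 := Real.log_le_sub_one_of_pos (by positivity)
    rw [Real.log_inv] at hinv
    have hxi : x⁻¹ ≤ 4/3 := by
      rw [inv_le_comm₀ hx0 (by norm_num)]
      linarith
    have : x⁻¹ - 1 = (1 - x) * x⁻¹ := by field_simp
    nlinarith [inv_pos.mpr hx0]

lemma pow23_le_half {j : ℕ} (hj : 6 ≤ j) : ((2:ℝ)/3) ^ j ≤ 1/2 := by
  calc ((2:ℝ)/3) ^ j ≤ (2/3) ^ 6 := pow_le_pow_of_le_one (by norm_num) (by norm_num) hj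
  _ ≤ 1/2 := by norm_num


/-- With `ρ` the unique solution of `σ(z) = 1` in `(0,1)` and `ρ_j = r j` the
unique solution of `σ_j(z) = 1` in `(0,1)` for `j ≥ 6`, one has
`ρ_j = ρ + ρ^j/σ'(ρ) + o(ρ^j)` as `j → ∞`. -/
theorem rho_j_asymptotics (ρ : ℝ)
    (hρ : ρ ∈ Set.Ioo (0 : ℝ) 1 ∧ sigmaFn ρ = 1)
    (hρu : ∀ x ∈ Set.Ioo (0 : ℝ) 1, sigmaFn x = 1 → x = ρ)
    (r : ℕ → ℝ)
    (hr : ∀ j, 6 ≤ j → r j ∈ Set.Ioo (0 : ℝ) 1 ∧ sigmaJFn j (r j) = 1)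
    (hru : ∀ j, 6 ≤ j → ∀ x ∈ Set.Ioo (0 : ℝ) 1, sigmaJFn j x = 1 → x = r j) :
    Tendsto (fun j : ℕ => (r j - ρ - ρ ^ j / deriv sigmaFn ρ) / ρ ^ j)
      atTop (nhds 0) := by
  obtain ⟨hρI, hρ1⟩ := hρ
  obtain ⟨hρa, hρb⟩ := rho_loc hρI hρ1
  have hρIcc : ρ ∈ Icc (1/2:ℝ) (2/3) := ⟨hρa, hρb.le⟩
  have hρpos : (0:ℝ) < ρ := by linarith
  have hD : deriv sigmaFn ρ = gFn ρ := (sigma_hasDerivAt (Icc_sub_tSet hρIcc)).deriv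
  have hgρ : 1 ≤ gFn ρ := gFn_ge_one hρIcc
  have heIcc : ∀ j, 6 ≤ j → r j ∈ Icc (1/2:ℝ) (2/3) := by
    intro j hj
    obtain ⟨h1, h2⟩ := e_loc (hr j hj).1 hj (hr j hj).2
    exact ⟨h1, h2.le⟩
  have hMVT : ∀ j : ℕ, ∃ c : ℝ, 6 ≤ j → c ∈ Icc (1/2:ℝ) (2/3) ∧ |c - ρ| ≤ |r j - ρ| ∧
      gFn c * (r j - ρ) = (r j) ^ j / (1 - (r j) ^ j) := by
    intro j
    by_cases hj : 6 ≤ j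
    · obtain ⟨hrI, hr1⟩ := hr j hj
      have hq : 0 < (r j) ^ j / (1 - (r j) ^ j) := e_pow_pos hrI hj
      have hσe : sigmaFn (r j) = 1 + (r j) ^ j / (1 - (r j) ^ j) := by
        unfold sigmaJFn at hr1; linarith
      have hne : r j ≠ ρ := by
        intro hEq
        rw [hEq] at hq
        rw [hEq, hρ1] at hσe
        linarith
      obtain ⟨cc, hcI, hc1, hc2⟩ := mvt_step hρIcc (heIcc j hj) hne
      exact ⟨cc, fun _ => ⟨hcI, hc1, by rw [hc2, hσe, hρ1]; ring⟩⟩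
    · exact ⟨ρ, fun h => absurd h hj⟩
  choose c hc using hMVT
  have hbound : ∀ j, 6 ≤ j → (r j) ^ j ≤ (2/3:ℝ) ^ j ∧ (1:ℝ)/2 ≤ 1 - (r j) ^ j := by
    intro j hj
    have hrj0 : (0:ℝ) ≤ r j := by linarith [(heIcc j hj).1]
    have h1 : (r j) ^ j ≤ (2/3:ℝ) ^ j := pow_le_pow_left₀ hrj0 (heIcc j hj).2 j
    exact ⟨h1, by linarith [pow23_le_half hj]⟩
  have habs : ∀ j, 6 ≤ j → |r j - ρ| ≤ 2 * (2/3:ℝ) ^ j := by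
    intro j hj
    obtain ⟨hcI, hc1, hc2⟩ := hc j hj
    have hgc : 1 ≤ gFn (c j) := gFn_ge_one hcI
    have hq : 0 < (r j) ^ j / (1 - (r j) ^ j) := e_pow_pos (hr j hj).1 hj
    have h1 : |r j - ρ| ≤ gFn (c j) * |r j - ρ| := by
      nlinarith [abs_nonneg (r j - ρ)]
    have h2 : gFn (c j) * |r j - ρ| = |gFn (c j) * (r j - ρ)| := by
      rw [abs_mul, abs_of_nonneg (by linarith : (0:ℝ) ≤ gFn (c j))]
    have h3 : |gFn (c j) * (r j - ρ)| = (r j) ^ j / (1 - (r j) ^ j) := by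
      rw [hc2, abs_of_pos hq]
    obtain ⟨hb1, hb2⟩ := hbound j hj
    have h4 : (r j) ^ j / (1 - (r j) ^ j) ≤ 2 * (2/3:ℝ) ^ j := by
      rw [div_le_iff₀ (by linarith)]
      have hp : (0:ℝ) ≤ (2/3:ℝ)^j := by positivity
      nlinarith
    linarith [h1, h2.le, h3.le, h2.ge, h3.ge]
  have T0 : Tendsto (fun j : ℕ => (2/3:ℝ) ^ j) atTop (nhds 0) :=
    tendsto_pow_atTop_nhds_zero_of_lt_one (by norm_num) (by norm_num)
  have T02 : Tendsto (fun j : ℕ => 2 * (2/3:ℝ) ^ j) atTop (nhds 0) := by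
    simpa using T0.const_mul 2
  have Tc : Tendsto c atTop (nhds ρ) := by
    have h1 : Tendsto (fun j => c j - ρ) atTop (nhds 0) := by
      apply squeeze_zero_norm' _ T02
      filter_upwards [eventually_ge_atTop 6] with j hj
      exact le_trans (by rw [Real.norm_eq_abs]; exact (hc j hj).2.1) (habs j hj)
    simpa using h1.add (tendsto_const_nhds (x := ρ))
  have hgcont : ContinuousAt gFn ρ :=
    gFn_continuousOn.continuousAt (isOpen_Ioo.mem_nhds (Icc_sub_tSet hρIcc))
  have TG : Tendsto (fun j => gFn (c j)) atTop (nhds (gFn ρ)) := hgcont.tendsto.comp Tc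
  have TE : Tendsto (fun j => (r j) ^ j) atTop (nhds 0) := by
    apply squeeze_zero_norm' _ T0
    filter_upwards [eventually_ge_atTop 6] with j hj
    rw [Real.norm_eq_abs, abs_of_nonneg (pow_nonneg (by linarith [(heIcc j hj).1]) j)]
    exact (hbound j hj).1
  have TA : Tendsto (fun j : ℕ => (r j / ρ) ^ j) atTop (nhds 1) := by
    have Tlog : Tendsto (fun j : ℕ => (j:ℝ) * Real.log (r j / ρ)) atTop (nhds 0) := by
      apply squeeze_zero_norm' (a := fun j : ℕ => (16/3) * ((j:ℝ) * (2/3) ^ j))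
      · filter_upwards [eventually_ge_atTop 6] with j hj
        have hx34 : 3/4 ≤ r j / ρ := by
          rw [le_div_iff₀ hρpos]
          have := (heIcc j hj).1
          linarith [hρIcc.2]
        have hlog := abs_log_le hx34
        have hx1 : |r j / ρ - 1| ≤ 2 * |r j - ρ| := by
          rw [show r j / ρ - 1 = (r j - ρ) / ρ by field_simp, abs_div, abs_of_pos hρpos,
            div_le_iff₀ hρpos]
          nlinarith [abs_nonneg (r j - ρ)]
        rw [Real.norm_eq_abs, abs_mul, Nat.abs_cast]
        have hj0 : (0:ℝ) ≤ (j:ℝ) := Nat.cast_nonneg j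
        calc (j:ℝ) * |Real.log (r j / ρ)| ≤ (j:ℝ) * ((4/3) * (2 * (2 * (2/3) ^ j))) := by
              apply mul_le_mul_of_nonneg_left _ hj0
              calc |Real.log (r j / ρ)| ≤ (4/3) * |r j / ρ - 1| := hlog
              _ ≤ (4/3) * (2 * |r j - ρ|) := by linarith [hx1]
              _ ≤ (4/3) * (2 * (2 * (2/3) ^ j)) := by linarith [habs j hj]
        _ = (16/3) * ((j:ℝ) * (2/3) ^ j) := by ring
      · have hsum : Summable (fun j : ℕ => (j:ℝ) * (2/3) ^ j) := by
          have := summable_pow_mul_geometric_of_norm_lt_one (R := ℝ) 1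
            (r := (2/3:ℝ)) (by rw [Real.norm_eq_abs, abs_of_nonneg] <;> norm_num)
          simpa using this
        simpa using (hsum.tendsto_atTop_zero).const_mul ((16:ℝ)/3)
    have hev : (fun j : ℕ => Real.exp ((j:ℝ) * Real.log (r j / ρ)))
        =ᶠ[atTop] (fun j : ℕ => (r j / ρ) ^ j) := by
      filter_upwards [eventually_ge_atTop 6] with j hj
      have hrpos : 0 < r j := by linarith [(heIcc j hj).1]
      rw [← Real.log_pow, Real.exp_log (by positivity)]
    have hcomp := (Real.continuous_exp.tendsto 0).comp Tlog
    rw [Real.exp_zero] at hcomp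
    exact Tendsto.congr' hev hcomp
  have TB : Tendsto (fun j => 1 - (r j) ^ j) atTop (nhds 1) := by
    simpa using (tendsto_const_nhds (x := (1:ℝ))).sub TE
  have hgne : gFn ρ ≠ 0 := by linarith
  have Tmain : Tendsto
      (fun j => (r j / ρ) ^ j / ((1 - (r j) ^ j) * gFn (c j)) - 1 / gFn ρ)
      atTop (nhds 0) := by
    have h1 : Tendsto (fun j => (1 - (r j) ^ j) * gFn (c j)) atTop (nhds (1 * gFn ρ)) :=
      TB.mul TG
    have h2 := TA.div h1 (by simpa using hgne)
    have h3 := h2.sub_const (1 / gFn ρ)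
    simpa using h3
  apply Tendsto.congr' _ Tmain
  filter_upwards [eventually_ge_atTop 6] with j hj
  obtain ⟨hcI, hc1, hc2⟩ := hc j hj
  have hgc : 1 ≤ gFn (c j) := gFn_ge_one hcI
  have hgc0 : gFn (c j) ≠ 0 := by linarith
  have h1e : (1:ℝ) - (r j) ^ j ≠ 0 := by linarith [(hbound j hj).2]
  have hρj : ρ ^ j ≠ 0 := pow_ne_zero j hρpos.ne'
  have hc2' : gFn (c j) * (r j - ρ) * (1 - (r j) ^ j) = (r j) ^ j := by
    rw [hc2, div_mul_cancel₀ _ h1e]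
  have key : (r j - ρ) / ρ ^ j = (r j / ρ) ^ j / ((1 - (r j) ^ j) * gFn (c j)) := by
    rw [div_pow, div_div, div_eq_div_iff hρj (mul_ne_zero hρj (mul_ne_zero h1e hgc0))]
    linear_combination ρ ^ j * hc2'
  rw [hD, sub_div, ← key]
  congr 1
  rw [div_div, mul_comm (gFn ρ) (ρ ^ j), ← div_div, div_self hρj]
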